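/- Let C be a monoidal category, acting on itself by the tensor product (its canonical actegory structure), and let x, y be objects of C. The map sending f : x ⟶ y to the class ⟨f ≫ (λ_y).inv, (λ_{𝟙}).hom | 𝟙⟩ is a bijection from the hom-set (x ⟶ y) to Optic((x, 𝟙),(y, 𝟙)); its inverse is well defined on the quotient and sends ⟨α, β | m⟩ (with α : x ⟶ m ⊗ y and β : m ⊗ 𝟙 ⟶ 𝟙) to α ≫ (((ρ_m).inv ≫ β) ⊗ 𝟙 y) ≫ (λ_y).hom. In particular the functor R embedding morphisms of C as optics with trivial backward part is fully faithful. -/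

import Mathlib

open CategoryTheory MonoidalCategory

variable {C : Type*} [Category C] [MonoidalCategory C]

/-- Representatives of optics (for the canonical self-action of a monoidal category). -/
def OpticRep (x u y v : C) : Type _ :=
  Σ m : C, (x ⟶ m ⊗ y) × (m ⊗ v ⟶ u)

/-- The coend relation: for `f : n ⟶ m`, `α : x ⟶ n ⊗ y`, `β : m ⊗ v ⟶ u`,
`(m, α ≫ (f ⊗ 𝟙 y), β)` is related to `(n, α, (f ⊗ 𝟙 v) ≫ β)`. -/
def OpticRel (x u y v : C) : OpticRep x u y v → OpticRep x u y v → Prop :=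
  fun A B => ∃ f : B.1 ⟶ A.1,
    A.2.1 = B.2.1 ≫ (f ⊗ₘ 𝟙 y) ∧ B.2.2 = (f ⊗ₘ 𝟙 v) ≫ A.2.2

/-- The optic coend `Optic((x,u),(y,v))`. -/
def Optic (x u y v : C) : Type _ := Quot (OpticRel x u y v)

/-- The map `f ↦ ⟨f ≫ (λ_ y).inv, (λ_ 𝟙).hom | 𝟙⟩` is a bijection from `x ⟶ y` to
`Optic((x,𝟙),(y,𝟙))`; its inverse is well defined on the quotient and sends
`⟨α, β | m⟩` to `α ≫ (((ρ_ m).inv ≫ β) ⊗ 𝟙 y) ≫ (λ_ y).hom`.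
In particular `R` is fully faithful. -/
theorem R_fully_faithful (x y : C) :
    ∃ g : Optic x (𝟙_ C) y (𝟙_ C) → (x ⟶ y),
      (∀ (m : C) (α : x ⟶ m ⊗ y) (β : m ⊗ 𝟙_ C ⟶ 𝟙_ C),
        g (Quot.mk (OpticRel x (𝟙_ C) y (𝟙_ C)) ⟨m, α, β⟩) =
          α ≫ (((ρ_ m).inv ≫ β) ⊗ₘ 𝟙 y) ≫ (λ_ y).hom) ∧
      Function.LeftInverse g
        (fun f : x ⟶ y =>
          Quot.mk (OpticRel x (𝟙_ C) y (𝟙_ C)) ⟨𝟙_ C, f ≫ (λ_ y).inv, (λ_ (𝟙_ C)).hom⟩) ∧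
      Function.RightInverse g
        (fun f : x ⟶ y =>
          Quot.mk (OpticRel x (𝟙_ C) y (𝟙_ C)) ⟨𝟙_ C, f ≫ (λ_ y).inv, (λ_ (𝟙_ C)).hom⟩) := by
  refine ⟨Quot.lift (fun A => A.2.1 ≫ (((ρ_ A.1).inv ≫ A.2.2) ⊗ₘ 𝟙 y) ≫ (λ_ y).hom) ?_,
    fun m α β => rfl, ?_, ?_⟩
  · rintro ⟨m, α, β⟩ ⟨n, α', β'⟩ ⟨f, h1, h2⟩
    dsimp at h1 h2 ⊢
    rw [h1, h2]
    simp [MonoidalCategory.tensorHom_def]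
  · intro f
    simp [unitors_equal]
  · intro q
    induction q using Quot.ind with
    | _ A =>
      obtain ⟨m, α, β⟩ := A
      refine Quot.sound ⟨(ρ_ m).inv ≫ β, by dsimp; simp, ?_⟩
      dsimp
      simp [MonoidalCategory.tensorHom_def, unitors_equal]
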